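/- Let M = (S, A, Ψ, R, p) be an MDP with discount factor γ ∈ [0,1) and let ~ = (~_S, ~_Ψ) be a visible symmetry of M, with quotient MDP M/~. For a policy π in M/~ define π'(s,a) := π([(s,a)]_Ψ) / N_Ψ(s,a) for (s,a) ∈ Ψ. Then π' is a policy in M, and if π is an optimal policy in M/~ then π' is an optimal policy in M. Moreover, if ~ is simple then π'(s,a) = π(a | [s]_S). -/

import Mathlib

/-- A Markov decision process with state type `S`, action type `A` and reward-label
type `Rw` (the countable bounded reward set is the image of `rval`).  `adm s` is the
finite nonempty set of admissible actions in state `s`, and `p s' r s a` is the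
probability of moving to state `s'` receiving the reward labelled `r` when taking
action `a` in state `s` (the dynamic is extended by `0` off the admissible pairs). -/
structure MDP (S A Rw : Type*) where
  adm : S → Finset A
  adm_nonempty : ∀ s, (adm s).Nonempty
  rval : Rw → ℝ
  rval_bdd : ∃ C : ℝ, ∀ r, |rval r| ≤ C
  p : S → Rw → S → A → ℝ
  p_nonneg : ∀ s' r s a, 0 ≤ p s' r s a
  p_adm : ∀ s a, a ∉ adm s → ∀ s' r, p s' r s a = 0
  p_sum : ∀ s a, a ∈ adm s → (∑' x : S × Rw, p x.1 x.2 s a) = 1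

namespace MDP

variable {S A Rw S' A' Rw' : Type*}

/-- A policy: a probability distribution over the admissible actions in each state
(extended by `0` off the admissible pairs). -/
def IsPolicy (M : MDP S A Rw) (π : S → A → ℝ) : Prop :=
  (∀ s a, 0 ≤ π s a) ∧ (∀ s a, a ∉ M.adm s → π s a = 0) ∧
    ∀ s, ∑ a ∈ M.adm s, π s a = 1

/-- `stepReward M π k s` is the expected reward `E_{π,p}[R_{k+1} | S_0 = s]`
received at step `k` of the trajectory generated by the policy `π` started at `s`. -/
noncomputable def stepReward (M : MDP S A Rw) (π : S → A → ℝ) : ℕ → S → ℝ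
  | 0, s => ∑ a ∈ M.adm s, π s a * ∑' x : S × Rw, M.p x.1 x.2 s a * M.rval x.2
  | k + 1, s => ∑ a ∈ M.adm s, π s a *
      ∑' s' : S, (∑' r : Rw, M.p s' r s a) * M.stepReward π k s'

/-- The value function `V_π(s) = E_{π,p}[∑_k γ^k R_{k+1} | S_0 = s]`. -/
noncomputable def value (M : MDP S A Rw) (γ : ℝ) (π : S → A → ℝ) (s : S) : ℝ :=
  ∑' k : ℕ, γ ^ k * M.stepReward π k s

/-- The optimal value function `V_*(s) = sup_π V_π(s)`. -/
noncomputable def optValue (M : MDP S A Rw) (γ : ℝ) (s : S) : ℝ :=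
  ⨆ π : {π : S → A → ℝ // M.IsPolicy π}, M.value γ π.1 s

/-- A policy is optimal if its value function coincides with the optimal value
function in every state. -/
def IsOptimal (M : MDP S A Rw) (γ : ℝ) (π : S → A → ℝ) : Prop :=
  M.IsPolicy π ∧ ∀ s, M.value γ π s = M.optValue γ s

/-- The set `Ψ` of admissible state-action pairs, as a type. -/
abbrev Pairs (M : MDP S A Rw) : Type _ := {q : S × A // q.2 ∈ M.adm q.1}

/-- A visible symmetry of an MDP: an equivalence relation `eqS` on states together
with an equivalence relation `eqP` on admissible state-action pairs such that
related pairs have related states, any admissible pair can be transported to any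
state related to its own, and related pairs have the same dynamic on
`eqS`-equivalence classes. -/
structure VisibleSymmetry (M : MDP S A Rw) where
  eqS : Setoid S
  eqP : Setoid M.Pairs
  lift_action : ∀ (q : M.Pairs) (s2 : S), eqS.r q.1.1 s2 →
    ∃ (a2 : A) (h2 : a2 ∈ M.adm s2), eqP.r q ⟨(s2, a2), h2⟩
  rel_states : ∀ q1 q2 : M.Pairs, eqP.r q1 q2 → eqS.r q1.1.1 q2.1.1
  rel_dyn : ∀ q1 q2 : M.Pairs, eqP.r q1 q2 → ∀ (s' : S) (r : Rw),
    (∑' x : {x : S // eqS.r x s'}, M.p x.1 r q1.1.1 q1.1.2) =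
      ∑' x : {x : S // eqS.r x s'}, M.p x.1 r q2.1.1 q2.1.2

/-- A visible symmetry is simple if related state-action pairs carry the same action. -/
def VisibleSymmetry.Simple {M : MDP S A Rw} (V : M.VisibleSymmetry) : Prop :=
  ∀ q1 q2 : M.Pairs, V.eqP.r q1 q2 → q1.1.2 = q2.1.2

/-- `N_Ψ(s,a)`: the number of admissible actions in `s` whose pair with `s` is
`eqP`-equivalent to `(s,a)`. -/
noncomputable def VisibleSymmetry.N {M : MDP S A Rw} (V : M.VisibleSymmetry)
    (s : S) (a : A) (h : a ∈ M.adm s) : ℕ :=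
  Set.ncard {a' : A | ∃ h' : a' ∈ M.adm s, V.eqP.r ⟨(s, a), h⟩ ⟨(s, a'), h'⟩}

/-- A relabeling of the MDP `M` to the MDP `M'`: a bijection `f` on states and, for each
state `s`, a bijection `g s` from the admissible actions of `s` to those of `f s`,
which together transport the dynamic of `M` to that of `M'`. -/
structure Relabeling (M : MDP S A Rw) (M' : MDP S' A' Rw) where
  f : S → S'
  g : S → A → A'
  f_bij : Function.Bijective f
  g_bij : ∀ s : S, Set.BijOn (g s) (M.adm s : Set A) (M'.adm (f s) : Set A')
  rval_eq : ∀ r : Rw, M'.rval r = M.rval r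
  dyn : ∀ (s : S) (a : A), a ∈ M.adm s → ∀ (st : S) (r : Rw),
    M.p st r s a = M'.p (f st) r (f s) (g s a)

end MDP

namespace MDPAux
open MDP

variable {S A Rw : Type*}

lemma abs_tsum_le {ι : Type*} {f : ι → ℝ} (hf : Summable fun i => |f i|) :
    |∑' i, f i| ≤ ∑' i, |f i| := by
  simpa [Real.norm_eq_abs] using
    norm_tsum_le_tsum_norm (f := f) (by simpa [Real.norm_eq_abs] using hf)

/-- expected one-step reward -/
noncomputable def expR (M : MDP S A Rw) (s : S) (a : A) : ℝ :=
  ∑' x : S × Rw, M.p x.1 x.2 s a * M.rval x.2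

/-- transition kernel marginalized over rewards -/
noncomputable def tr (M : MDP S A Rw) (s : S) (a : A) (s' : S) : ℝ :=
  ∑' r : Rw, M.p s' r s a

variable (M : MDP S A Rw)

lemma summable_p {s : S} {a : A} (h : a ∈ M.adm s) :
    Summable (fun x : S × Rw => M.p x.1 x.2 s a) := by
  by_contra hs
  have := M.p_sum s a h
  rw [tsum_eq_zero_of_not_summable hs] at this
  norm_num at this

lemma summable_p_slice {s : S} {a : A} (h : a ∈ M.adm s) (s' : S) :
    Summable (fun r : Rw => M.p s' r s a) := by
  have : (fun r : Rw => M.p s' r s a) =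
      (fun x : S × Rw => M.p x.1 x.2 s a) ∘ (fun r => (s', r)) := rfl
  rw [this]
  exact (summable_p M h).comp_injective (fun r r' hrr => by simpa using hrr)

lemma tr_nonneg (s : S) (a : A) (s' : S) : 0 ≤ tr M s a s' :=
  tsum_nonneg fun r => M.p_nonneg s' r s a

lemma summable_tr {s : S} {a : A} (h : a ∈ M.adm s) : Summable (tr M s a) :=
  (summable_p M h).prod

lemma tsum_tr {s : S} {a : A} (h : a ∈ M.adm s) : ∑' s' : S, tr M s a s' = 1 := by
  rw [← M.p_sum s a h]
  exact (Summable.tsum_prod' (summable_p M h) (fun s' => summable_p_slice M h s')).symm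

lemma summable_tr_mul {s : S} {a : A} (h : a ∈ M.adm s) {g : S → ℝ} {D : ℝ}
    (hg : ∀ x, |g x| ≤ D) : Summable (fun s' => tr M s a s' * g s') := by
  refine Summable.of_norm_bounded (g := fun s' => tr M s a s' * D)
    ((summable_tr M h).mul_right D) (fun s' => ?_)
  rw [Real.norm_eq_abs, abs_mul, abs_of_nonneg (tr_nonneg M s a s')]
  exact mul_le_mul_of_nonneg_left (hg s') (tr_nonneg M s a s')

lemma abs_tsum_tr_mul_le {s : S} {a : A} (h : a ∈ M.adm s) {g : S → ℝ} {D : ℝ}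
    (hg : ∀ x, |g x| ≤ D) : |∑' s' : S, tr M s a s' * g s'| ≤ D := by
  have h1 : |∑' s' : S, tr M s a s' * g s'| ≤ ∑' s' : S, |tr M s a s' * g s'| :=
    abs_tsum_le (summable_tr_mul M h hg).abs
  have h2 : ∑' s' : S, |tr M s a s' * g s'| ≤ ∑' s' : S, tr M s a s' * D := by
    refine Summable.tsum_le_tsum (fun s' => ?_) (summable_tr_mul M h hg).abs
      ((summable_tr M h).mul_right D)
    rw [abs_mul, abs_of_nonneg (tr_nonneg M s a s')]
    exact mul_le_mul_of_nonneg_left (hg s') (tr_nonneg M s a s')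
  have h3 : ∑' s' : S, tr M s a s' * D = D := by
    rw [tsum_mul_right, tsum_tr M h, one_mul]
  linarith

variable {C : ℝ}

lemma summable_pr (hC : ∀ r, |M.rval r| ≤ C) {s : S} {a : A} (h : a ∈ M.adm s) :
    Summable (fun x : S × Rw => M.p x.1 x.2 s a * M.rval x.2) := by
  refine Summable.of_norm_bounded (g := fun x => M.p x.1 x.2 s a * C)
    ((summable_p M h).mul_right C) (fun x => ?_)
  rw [Real.norm_eq_abs, abs_mul, abs_of_nonneg (M.p_nonneg _ _ _ _)]
  exact mul_le_mul_of_nonneg_left (hC x.2) (M.p_nonneg _ _ _ _)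

lemma abs_expR_le (hC : ∀ r, |M.rval r| ≤ C) (hC0 : 0 ≤ C) (s : S) (a : A) :
    |expR M s a| ≤ C := by
  by_cases h : a ∈ M.adm s
  · have h1 : |expR M s a| ≤ ∑' x : S × Rw, |M.p x.1 x.2 s a * M.rval x.2| :=
      abs_tsum_le (summable_pr M hC h).abs
    have h2 : ∑' x : S × Rw, |M.p x.1 x.2 s a * M.rval x.2| ≤
        ∑' x : S × Rw, M.p x.1 x.2 s a * C := by
      refine Summable.tsum_le_tsum (fun x => ?_) (summable_pr M hC h).abs
        ((summable_p M h).mul_right C)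
      rw [abs_mul, abs_of_nonneg (M.p_nonneg _ _ _ _)]
      exact mul_le_mul_of_nonneg_left (hC x.2) (M.p_nonneg _ _ _ _)
    have h3 : ∑' x : S × Rw, M.p x.1 x.2 s a * C = C := by
      rw [tsum_mul_right, M.p_sum s a h, one_mul]
    linarith
  · have : expR M s a = 0 := by simp [expR, M.p_adm s a h]
    rw [this, abs_zero]; exact hC0

lemma abs_sum_pi_le {π : S → A → ℝ} (hπ : M.IsPolicy π) (s : S) {f : A → ℝ} {D : ℝ}
    (hf : ∀ a ∈ M.adm s, |f a| ≤ D) :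
    |∑ a ∈ M.adm s, π s a * f a| ≤ D := by
  have h1 : |∑ a ∈ M.adm s, π s a * f a| ≤ ∑ a ∈ M.adm s, |π s a * f a| :=
    Finset.abs_sum_le_sum_abs _ _
  have h2 : ∑ a ∈ M.adm s, |π s a * f a| ≤ ∑ a ∈ M.adm s, π s a * D := by
    refine Finset.sum_le_sum fun a ha => ?_
    rw [abs_mul, abs_of_nonneg (hπ.1 s a)]
    exact mul_le_mul_of_nonneg_left (hf a ha) (hπ.1 s a)
  have h3 : ∑ a ∈ M.adm s, π s a * D = D := by
    rw [← Finset.sum_mul, hπ.2.2 s, one_mul]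
  linarith

lemma stepReward_zero (π : S → A → ℝ) (s : S) :
    M.stepReward π 0 s = ∑ a ∈ M.adm s, π s a * expR M s a := rfl

lemma stepReward_succ (π : S → A → ℝ) (k : ℕ) (s : S) :
    M.stepReward π (k + 1) s =
      ∑ a ∈ M.adm s, π s a * ∑' s' : S, tr M s a s' * M.stepReward π k s' := rfl

lemma abs_stepReward_le (hC : ∀ r, |M.rval r| ≤ C) (hC0 : 0 ≤ C)
    {π : S → A → ℝ} (hπ : M.IsPolicy π) :
    ∀ (k : ℕ) (s : S), |M.stepReward π k s| ≤ C := by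
  intro k
  induction k with
  | zero =>
    intro s
    rw [stepReward_zero]
    exact abs_sum_pi_le M hπ s (fun a _ => abs_expR_le M hC hC0 s a)
  | succ k ih =>
    intro s
    rw [stepReward_succ]
    exact abs_sum_pi_le M hπ s (fun a ha => abs_tsum_tr_mul_le M ha (fun s' => ih s'))

end MDPAux

namespace MDPAux
open MDP

variable {S A Rw : Type*} (M : MDP S A Rw) {C : ℝ} {γ : ℝ}

/-- partial (finite-horizon) value -/
noncomputable def pv (M : MDP S A Rw) (γ : ℝ) (π : S → A → ℝ) (n : ℕ) (s : S) : ℝ :=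
  ∑ k ∈ Finset.range n, γ ^ k * M.stepReward π k s

lemma abs_pv_le (hC : ∀ r, |M.rval r| ≤ C) (hC0 : 0 ≤ C)
    (hγ0 : 0 ≤ γ) (hγ1 : γ < 1) {π : S → A → ℝ} (hπ : M.IsPolicy π) (n : ℕ) (s : S) :
    |pv M γ π n s| ≤ C / (1 - γ) := by
  have h1 : |pv M γ π n s| ≤ ∑ k ∈ Finset.range n, γ ^ k * C := by
    refine le_trans (Finset.abs_sum_le_sum_abs _ _) (Finset.sum_le_sum fun k _ => ?_)
    rw [abs_mul, abs_of_nonneg (pow_nonneg hγ0 k)]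
    exact mul_le_mul_of_nonneg_left (abs_stepReward_le M hC hC0 hπ k s) (pow_nonneg hγ0 k)
  have h2 : ∑ k ∈ Finset.range n, γ ^ k * C ≤ ∑' k : ℕ, γ ^ k * C :=
    Summable.sum_le_tsum _ (fun k _ => mul_nonneg (pow_nonneg hγ0 k) hC0)
      ((summable_geometric_of_lt_one hγ0 hγ1).mul_right C)
  have h3 : ∑' k : ℕ, γ ^ k * C = C / (1 - γ) := by
    rw [tsum_mul_right, tsum_geometric_of_lt_one hγ0 hγ1, div_eq_mul_inv, mul_comm]
  linarith

lemma summable_val (hC : ∀ r, |M.rval r| ≤ C) (hC0 : 0 ≤ C)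
    (hγ0 : 0 ≤ γ) (hγ1 : γ < 1) {π : S → A → ℝ} (hπ : M.IsPolicy π) (s : S) :
    Summable (fun k : ℕ => γ ^ k * M.stepReward π k s) := by
  refine Summable.of_norm_bounded (g := fun k => γ ^ k * C)
    ((summable_geometric_of_lt_one hγ0 hγ1).mul_right C) (fun k => ?_)
  rw [Real.norm_eq_abs, abs_mul, abs_of_nonneg (pow_nonneg hγ0 k)]
  exact mul_le_mul_of_nonneg_left (abs_stepReward_le M hC hC0 hπ k s) (pow_nonneg hγ0 k)

lemma pv_tendsto_value (hC : ∀ r, |M.rval r| ≤ C) (hC0 : 0 ≤ C)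
    (hγ0 : 0 ≤ γ) (hγ1 : γ < 1) {π : S → A → ℝ} (hπ : M.IsPolicy π) (s : S) :
    Filter.Tendsto (fun n => pv M γ π n s) Filter.atTop (nhds (M.value γ π s)) :=
  (summable_val M hC hC0 hγ0 hγ1 hπ s).hasSum.tendsto_sum_nat

lemma abs_value_le (hC : ∀ r, |M.rval r| ≤ C) (hC0 : 0 ≤ C)
    (hγ0 : 0 ≤ γ) (hγ1 : γ < 1) {π : S → A → ℝ} (hπ : M.IsPolicy π) (s : S) :
    |M.value γ π s| ≤ C / (1 - γ) := by
  have hs := summable_val M hC hC0 hγ0 hγ1 hπ s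
  have h1 : |M.value γ π s| ≤ ∑' k : ℕ, |γ ^ k * M.stepReward π k s| :=
    abs_tsum_le hs.abs
  have h2 : ∑' k : ℕ, |γ ^ k * M.stepReward π k s| ≤ ∑' k : ℕ, γ ^ k * C := by
    refine Summable.tsum_le_tsum (fun k => ?_) hs.abs
      ((summable_geometric_of_lt_one hγ0 hγ1).mul_right C)
    rw [abs_mul, abs_of_nonneg (pow_nonneg hγ0 k)]
    exact mul_le_mul_of_nonneg_left (abs_stepReward_le M hC hC0 hπ k s) (pow_nonneg hγ0 k)
  have h3 : ∑' k : ℕ, γ ^ k * C = C / (1 - γ) := by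
    rw [tsum_mul_right, tsum_geometric_of_lt_one hγ0 hγ1, div_eq_mul_inv, mul_comm]
  linarith

lemma bddAbove_values (hC : ∀ r, |M.rval r| ≤ C) (hC0 : 0 ≤ C)
    (hγ0 : 0 ≤ γ) (hγ1 : γ < 1) (s : S) :
    BddAbove (Set.range fun π : {π : S → A → ℝ // M.IsPolicy π} => M.value γ π.1 s) := by
  refine ⟨C / (1 - γ), ?_⟩
  rintro _ ⟨π, rfl⟩
  exact (abs_le.1 (abs_value_le M hC hC0 hγ0 hγ1 π.2 s)).2

lemma value_le_optValue (hC : ∀ r, |M.rval r| ≤ C) (hC0 : 0 ≤ C)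
    (hγ0 : 0 ≤ γ) (hγ1 : γ < 1) {π : S → A → ℝ} (hπ : M.IsPolicy π) (s : S) :
    M.value γ π s ≤ M.optValue γ s :=
  le_ciSup (bddAbove_values M hC hC0 hγ0 hγ1 s) ⟨π, hπ⟩

/-- Bellman recursion for the partial value. -/
lemma pv_succ (hC : ∀ r, |M.rval r| ≤ C) (hC0 : 0 ≤ C)
    (hγ0 : 0 ≤ γ) (hγ1 : γ < 1) {π : S → A → ℝ} (hπ : M.IsPolicy π) (n : ℕ) (s : S) :
    pv M γ π (n + 1) s = ∑ a ∈ M.adm s, π s a *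
      (expR M s a + γ * ∑' s' : S, tr M s a s' * pv M γ π n s') := by
  have habs : ∀ k s', |M.stepReward π k s'| ≤ C := abs_stepReward_le M hC hC0 hπ
  have key : ∀ a ∈ M.adm s,
      ∑ k ∈ Finset.range n, γ ^ (k+1) * ∑' s' : S, tr M s a s' * M.stepReward π k s'
        = γ * ∑' s' : S, tr M s a s' * pv M γ π n s' := by
    intro a ha
    have hsum : ∀ k ∈ Finset.range n,
        Summable (fun s' => γ ^ (k+1) * (tr M s a s' * M.stepReward π k s')) :=
      fun k _ => (summable_tr_mul M ha (fun s' => habs k s')).mul_left _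
    calc ∑ k ∈ Finset.range n, γ ^ (k+1) * ∑' s' : S, tr M s a s' * M.stepReward π k s'
        = ∑ k ∈ Finset.range n, ∑' s' : S, γ ^ (k+1) * (tr M s a s' * M.stepReward π k s') := by
          exact Finset.sum_congr rfl fun k _ => (tsum_mul_left).symm
      _ = ∑' s' : S, ∑ k ∈ Finset.range n, γ ^ (k+1) * (tr M s a s' * M.stepReward π k s') :=
          (Summable.tsum_finsetSum hsum).symm
      _ = ∑' s' : S, γ * (tr M s a s' * pv M γ π n s') := by
          refine tsum_congr fun s' => ?_
          rw [pv, Finset.mul_sum, Finset.mul_sum]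
          refine Finset.sum_congr rfl fun k _ => by ring
      _ = γ * ∑' s' : S, tr M s a s' * pv M γ π n s' := tsum_mul_left
  calc pv M γ π (n + 1) s
      = M.stepReward π 0 s +
        ∑ k ∈ Finset.range n, γ ^ (k+1) * M.stepReward π (k+1) s := by
        rw [pv, Finset.sum_range_succ']
        simp [add_comm]
    _ = (∑ a ∈ M.adm s, π s a * expR M s a) +
        ∑ a ∈ M.adm s, ∑ k ∈ Finset.range n,
          γ ^ (k+1) * (π s a * ∑' s' : S, tr M s a s' * M.stepReward π k s') := by
        rw [stepReward_zero]
        congr 1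
        rw [Finset.sum_comm]
        refine Finset.sum_congr rfl fun k _ => ?_
        rw [stepReward_succ, Finset.mul_sum]
    _ = ∑ a ∈ M.adm s, π s a *
        (expR M s a + γ * ∑' s' : S, tr M s a s' * pv M γ π n s') := by
        rw [← Finset.sum_add_distrib]
        refine Finset.sum_congr rfl fun a ha => ?_
        rw [← key a ha, mul_add]
        congr 1
        rw [Finset.mul_sum]
        refine Finset.sum_congr rfl fun k _ => by ring

end MDPAux

set_option maxHeartbeats 1000000
namespace MDPAux
open MDP

variable {S A Rw : Type*} (M : MDP S A Rw) {C : ℝ} {γ : ℝ}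

noncomputable def backup (M : MDP S A Rw) (γ : ℝ) (W : S → ℝ) (s : S) (a : A) : ℝ :=
  expR M s a + γ * ∑' s' : S, tr M s a s' * W s'

noncomputable def bop (M : MDP S A Rw) (γ : ℝ) (W : S → ℝ) (s : S) : ℝ :=
  (M.adm s).sup' (M.adm_nonempty s) (fun a => backup M γ W s a)

noncomputable def bit (M : MDP S A Rw) (γ : ℝ) : ℕ → S → ℝ
  | 0 => fun _ => 0
  | n + 1 => bop M γ (bit M γ n)

lemma bit_succ_eq (n : ℕ) (s : S) :
    bit M γ (n + 1) s = (M.adm s).sup' (M.adm_nonempty s)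
      (fun a => backup M γ (bit M γ n) s a) := rfl

lemma abs_sup'_le {ι : Type*} {t : Finset ι} (H : t.Nonempty) {f : ι → ℝ} {D : ℝ}
    (h : ∀ i ∈ t, |f i| ≤ D) : |t.sup' H f| ≤ D := by
  rw [abs_le]
  constructor
  · obtain ⟨i, hi⟩ := H
    exact le_trans (abs_le.1 (h i hi)).1 (Finset.le_sup' f hi)
  · exact Finset.sup'_le H f fun i hi => (abs_le.1 (h i hi)).2

lemma abs_sup'_sub_le {ι : Type*} {t : Finset ι} (H : t.Nonempty) {f g : ι → ℝ} {D : ℝ}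
    (h : ∀ i ∈ t, |f i - g i| ≤ D) : |t.sup' H f - t.sup' H g| ≤ D := by
  rw [abs_le]
  constructor
  · rw [neg_le, neg_sub]
    rw [sub_le_iff_le_add]
    refine Finset.sup'_le H g fun i hi => ?_
    have := (abs_le.1 (h i hi)).1
    have h2 : g i ≤ D + f i := by linarith
    exact le_trans h2 (add_le_add_right (Finset.le_sup' f hi) D)
  · rw [sub_le_iff_le_add]
    refine Finset.sup'_le H f fun i hi => ?_
    have := (abs_le.1 (h i hi)).2
    have h2 : f i ≤ D + g i := by linarith
    exact le_trans h2 (add_le_add_right (Finset.le_sup' g hi) D)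

lemma backup_sub_le (hγ0 : 0 ≤ γ) {W1 W2 : S → ℝ} {D D1 D2 : ℝ}
    (hW1 : ∀ x, |W1 x| ≤ D1) (hW2 : ∀ x, |W2 x| ≤ D2)
    (h : ∀ x, |W1 x - W2 x| ≤ D) {s : S} {a : A} (ha : a ∈ M.adm s) :
    |backup M γ W1 s a - backup M γ W2 s a| ≤ γ * D := by
  have hsub : ∑' s' : S, tr M s a s' * W1 s' - ∑' s' : S, tr M s a s' * W2 s'
      = ∑' s' : S, tr M s a s' * (W1 s' - W2 s') := by
    rw [← Summable.tsum_sub (summable_tr_mul M ha hW1) (summable_tr_mul M ha hW2)]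
    exact tsum_congr fun s' => by ring
  have : backup M γ W1 s a - backup M γ W2 s a
      = γ * ∑' s' : S, tr M s a s' * (W1 s' - W2 s') := by
    rw [backup, backup, ← hsub]; ring
  rw [this, abs_mul, abs_of_nonneg hγ0]
  exact mul_le_mul_of_nonneg_left (abs_tsum_tr_mul_le M ha h) hγ0

lemma backup_mono (hγ0 : 0 ≤ γ) {W1 W2 : S → ℝ} {D1 D2 : ℝ}
    (hW1 : ∀ x, |W1 x| ≤ D1) (hW2 : ∀ x, |W2 x| ≤ D2)
    (h : ∀ x, W1 x ≤ W2 x) {s : S} {a : A} (ha : a ∈ M.adm s) :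
    backup M γ W1 s a ≤ backup M γ W2 s a := by
  refine add_le_add_right (mul_le_mul_of_nonneg_left ?_ hγ0) _
  exact Summable.tsum_le_tsum
    (fun s' => mul_le_mul_of_nonneg_left (h s') (tr_nonneg M s a s'))
    (summable_tr_mul M ha hW1) (summable_tr_mul M ha hW2)

lemma abs_backup_le (hC : ∀ r, |M.rval r| ≤ C) (hC0 : 0 ≤ C) (hγ0 : 0 ≤ γ)
    {W : S → ℝ} {D : ℝ} (hW : ∀ x, |W x| ≤ D) {s : S} {a : A} (ha : a ∈ M.adm s) :
    |backup M γ W s a| ≤ C + γ * D := by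
  refine le_trans (abs_add_le _ _) (add_le_add (abs_expR_le M hC hC0 s a) ?_)
  rw [abs_mul, abs_of_nonneg hγ0]
  exact mul_le_mul_of_nonneg_left (abs_tsum_tr_mul_le M ha hW) hγ0

lemma abs_bit_le (hC : ∀ r, |M.rval r| ≤ C) (hC0 : 0 ≤ C) (hγ0 : 0 ≤ γ) (hγ1 : γ < 1) :
    ∀ n s, |bit M γ n s| ≤ C / (1 - γ) := by
  have h1γ : 0 < 1 - γ := by linarith
  intro n
  induction n with
  | zero => intro s; simp [bit]; positivity
  | succ n ih =>
    intro s
    have key : C + γ * (C / (1 - γ)) = C / (1 - γ) := by field_simp; ring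
    rw [bit_succ_eq]
    refine abs_sup'_le _ fun a ha => ?_
    rw [← key]
    exact abs_backup_le M hC hC0 hγ0 ih ha

lemma abs_bit_succ_sub_le (hC : ∀ r, |M.rval r| ≤ C) (hC0 : 0 ≤ C)
    (hγ0 : 0 ≤ γ) (hγ1 : γ < 1) :
    ∀ n s, |bit M γ (n + 1) s - bit M γ n s| ≤ C * γ ^ n := by
  have h1γ : 0 < 1 - γ := by linarith
  intro n
  induction n with
  | zero =>
    intro s
    have h0 : bit M γ 0 s = 0 := rfl
    rw [h0, sub_zero, pow_zero, mul_one, bit_succ_eq]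
    refine abs_sup'_le _ fun a ha => ?_
    have hb : backup M γ (bit M γ 0) s a = expR M s a := by
      simp [backup, bit, tsum_zero]
    rw [hb]
    exact abs_expR_le M hC hC0 s a
  | succ n ih =>
    intro s
    have : |bit M γ (n+2) s - bit M γ (n+1) s| ≤ γ * (C * γ ^ n) := by
      rw [bit_succ_eq M (n+1), bit_succ_eq M n]
      refine abs_sup'_sub_le _ fun a ha => ?_
      exact backup_sub_le M hγ0 (abs_bit_le M hC hC0 hγ0 hγ1 (n+1))
        (abs_bit_le M hC hC0 hγ0 hγ1 n) ih ha
    calc |bit M γ (n+2) s - bit M γ (n+1) s| ≤ γ * (C * γ ^ n) := this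
      _ = C * γ ^ (n+1) := by ring

noncomputable def vinf (M : MDP S A Rw) (γ : ℝ) (s : S) : ℝ :=
  ∑' n : ℕ, (bit M γ (n + 1) s - bit M γ n s)

lemma summable_bitd (hC : ∀ r, |M.rval r| ≤ C) (hC0 : 0 ≤ C)
    (hγ0 : 0 ≤ γ) (hγ1 : γ < 1) (s : S) :
    Summable (fun n => bit M γ (n + 1) s - bit M γ n s) := by
  refine Summable.of_norm_bounded (g := fun n => C * γ ^ n)
    ((summable_geometric_of_lt_one hγ0 hγ1).mul_left C) (fun n => ?_)
  exact abs_bit_succ_sub_le M hC hC0 hγ0 hγ1 n s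

lemma bit_tendsto_vinf (hC : ∀ r, |M.rval r| ≤ C) (hC0 : 0 ≤ C)
    (hγ0 : 0 ≤ γ) (hγ1 : γ < 1) (s : S) :
    Filter.Tendsto (fun n => bit M γ n s) Filter.atTop (nhds (vinf M γ s)) := by
  have h2 := (summable_bitd M hC hC0 hγ0 hγ1 s).hasSum.tendsto_sum_nat
  have heq : ∀ n, ∑ k ∈ Finset.range n, (bit M γ (k + 1) s - bit M γ k s)
      = bit M γ n s := by
    intro n
    rw [Finset.sum_range_sub (fun k => bit M γ k s) n]
    simp [bit]
  exact Filter.Tendsto.congr heq h2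

lemma abs_vinf_sub_bit_le (hC : ∀ r, |M.rval r| ≤ C) (hC0 : 0 ≤ C)
    (hγ0 : 0 ≤ γ) (hγ1 : γ < 1) (n : ℕ) (s : S) :
    |vinf M γ s - bit M γ n s| ≤ C * γ ^ n / (1 - γ) := by
  have h1γ : 0 < 1 - γ := by linarith
  have hs := summable_bitd M hC hC0 hγ0 hγ1 s
  have key := Summable.sum_add_tsum_nat_add (f := fun k => bit M γ (k + 1) s - bit M γ k s) n hs
  have heq : ∑ k ∈ Finset.range n, (bit M γ (k + 1) s - bit M γ k s) = bit M γ n s := by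
    rw [Finset.sum_range_sub (fun k => bit M γ k s) n]; simp [bit]
  have hdiff : vinf M γ s - bit M γ n s
      = ∑' k : ℕ, (bit M γ (k + n + 1) s - bit M γ (k + n) s) := by
    rw [vinf, ← key, heq]; ring
  rw [hdiff]
  have hs2 : Summable (fun k : ℕ => bit M γ (k + n + 1) s - bit M γ (k + n) s) :=
    (summable_nat_add_iff n).2 hs
  have h1 : |∑' k : ℕ, (bit M γ (k + n + 1) s - bit M γ (k + n) s)|
      ≤ ∑' k : ℕ, |bit M γ (k + n + 1) s - bit M γ (k + n) s| := abs_tsum_le hs2.abs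
  have h2 : ∑' k : ℕ, |bit M γ (k + n + 1) s - bit M γ (k + n) s|
      ≤ ∑' k : ℕ, C * γ ^ n * γ ^ k := by
    refine Summable.tsum_le_tsum (fun k => ?_) hs2.abs
      ((summable_geometric_of_lt_one hγ0 hγ1).mul_left _)
    calc |bit M γ (k + n + 1) s - bit M γ (k + n) s| ≤ C * γ ^ (k + n) :=
          abs_bit_succ_sub_le M hC hC0 hγ0 hγ1 (k + n) s
      _ = C * γ ^ n * γ ^ k := by rw [pow_add]; ring
  have h3 : ∑' k : ℕ, C * γ ^ n * γ ^ k = C * γ ^ n / (1 - γ) := by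
    rw [tsum_mul_left, tsum_geometric_of_lt_one hγ0 hγ1, div_eq_mul_inv]
  linarith

lemma abs_vinf_le (hC : ∀ r, |M.rval r| ≤ C) (hC0 : 0 ≤ C)
    (hγ0 : 0 ≤ γ) (hγ1 : γ < 1) (s : S) : |vinf M γ s| ≤ C / (1 - γ) := by
  have := abs_vinf_sub_bit_le M hC hC0 hγ0 hγ1 0 s
  simpa [bit] using this

lemma bop_vinf (hC : ∀ r, |M.rval r| ≤ C) (hC0 : 0 ≤ C)
    (hγ0 : 0 ≤ γ) (hγ1 : γ < 1) (s : S) : bop M γ (vinf M γ) s = vinf M γ s := by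
  have h1γ : 0 < 1 - γ := by linarith
  have key : ∀ n : ℕ, |bop M γ (vinf M γ) s - vinf M γ s| ≤ 2 * C / (1 - γ) * γ ^ n := by
    intro n
    have hb1 : |bop M γ (vinf M γ) s - bit M γ (n + 1) s| ≤ γ * (C * γ ^ n / (1 - γ)) := by
      rw [bit_succ_eq M n]
      refine abs_sup'_sub_le _ fun a ha => ?_
      exact backup_sub_le M hγ0 (abs_vinf_le M hC hC0 hγ0 hγ1)
        (abs_bit_le M hC hC0 hγ0 hγ1 n)
        (fun x => abs_vinf_sub_bit_le M hC hC0 hγ0 hγ1 n x) ha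
    have hb2 : |bit M γ (n + 1) s - vinf M γ s| ≤ C * γ ^ (n + 1) / (1 - γ) := by
      rw [abs_sub_comm]
      exact abs_vinf_sub_bit_le M hC hC0 hγ0 hγ1 (n + 1) s
    have hγn : γ ^ (n + 1) ≤ γ ^ n := pow_le_pow_of_le_one hγ0 (le_of_lt hγ1) (Nat.le_succ n)
    have e1 : γ * (C * γ ^ n / (1 - γ)) = C * γ ^ (n+1) / (1 - γ) := by
      field_simp; ring
    have e2 : C * γ ^ (n+1) / (1 - γ) ≤ C / (1-γ) * γ ^ n := by
      have h := (div_le_div_iff_of_pos_right h1γ).2 (mul_le_mul_of_nonneg_left hγn hC0)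
      calc C * γ ^ (n+1) / (1 - γ) ≤ C * γ ^ n / (1 - γ) := h
        _ = C / (1-γ) * γ ^ n := by ring
    calc |bop M γ (vinf M γ) s - vinf M γ s|
        ≤ |bop M γ (vinf M γ) s - bit M γ (n+1) s| + |bit M γ (n+1) s - vinf M γ s| := by
          have := abs_sub_le (bop M γ (vinf M γ) s) (bit M γ (n+1) s) (vinf M γ s)
          exact this
      _ ≤ γ * (C * γ ^ n / (1 - γ)) + C * γ ^ (n + 1) / (1 - γ) := add_le_add hb1 hb2
      _ ≤ 2 * C / (1 - γ) * γ ^ n := by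
          rw [e1]
          have e3 : 2 * C / (1 - γ) * γ ^ n = 2 * (C / (1-γ) * γ ^ n) := by ring
          linarith
  have hlim : Filter.Tendsto (fun n : ℕ => 2 * C / (1 - γ) * γ ^ n)
      Filter.atTop (nhds 0) := by
    simpa using (tendsto_pow_atTop_nhds_zero_of_lt_one hγ0 hγ1).const_mul (2 * C / (1 - γ))
  have : |bop M γ (vinf M γ) s - vinf M γ s| ≤ 0 :=
    ge_of_tendsto hlim (Filter.Eventually.of_forall key)
  have := abs_nonneg (bop M γ (vinf M γ) s - vinf M γ s)
  have h0 : |bop M γ (vinf M γ) s - vinf M γ s| = 0 := le_antisymm ‹_› ‹_›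
  rw [abs_eq_zero, sub_eq_zero] at h0
  exact h0

end MDPAux

namespace MDPAux
open MDP

variable {S A Rw : Type*} (M : MDP S A Rw) {C : ℝ} {γ : ℝ}

noncomputable def gact (M : MDP S A Rw) (γ : ℝ) (s : S) : A :=
  (Finset.exists_mem_eq_sup' (M.adm_nonempty s)
    (fun a => backup M γ (vinf M γ) s a)).choose

lemma gact_mem (s : S) : gact M γ s ∈ M.adm s :=
  (Finset.exists_mem_eq_sup' (M.adm_nonempty s)
    (fun a => backup M γ (vinf M γ) s a)).choose_spec.1

lemma gact_spec (s : S) :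
    bop M γ (vinf M γ) s = backup M γ (vinf M γ) s (gact M γ s) :=
  (Finset.exists_mem_eq_sup' (M.adm_nonempty s)
    (fun a => backup M γ (vinf M γ) s a)).choose_spec.2

open Classical in
noncomputable def gpol (M : MDP S A Rw) (γ : ℝ) (s : S) (a : A) : ℝ :=
  if a = gact M γ s then 1 else 0

lemma gpol_policy : M.IsPolicy (gpol M γ) := by
  classical
  refine ⟨fun s a => ?_, fun s a ha => ?_, fun s => ?_⟩
  · rw [gpol]; split <;> norm_num
  · rw [gpol]
    split
    · exact absurd (by simpa [*] using gact_mem M (γ := γ) s) ha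
    · rfl
  · have : ∀ a ∈ M.adm s, gpol M γ s a = if a = gact M γ s then 1 else 0 :=
      fun a _ => by rw [gpol]
    rw [Finset.sum_congr rfl this, Finset.sum_ite_eq' (M.adm s) (gact M γ s) (fun _ => 1),
      if_pos (gact_mem M s)]

lemma sum_gpol (s : S) (f : A → ℝ) :
    ∑ a ∈ M.adm s, gpol M γ s a * f a = f (gact M γ s) := by
  classical
  have : ∀ a ∈ M.adm s, gpol M γ s a * f a = if a = gact M γ s then f a else 0 := by
    intro a _
    rw [gpol]; split <;> simp
  rw [Finset.sum_congr rfl this, Finset.sum_ite_eq' (M.adm s) (gact M γ s) f,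
    if_pos (gact_mem M s)]

lemma pv_gpol_close (hC : ∀ r, |M.rval r| ≤ C) (hC0 : 0 ≤ C)
    (hγ0 : 0 ≤ γ) (hγ1 : γ < 1) :
    ∀ (n : ℕ) (s : S), |pv M γ (gpol M γ) n s - vinf M γ s| ≤ C / (1 - γ) * γ ^ n := by
  have h1γ : 0 < 1 - γ := by linarith
  intro n
  induction n with
  | zero =>
    intro s
    have : pv M γ (gpol M γ) 0 s = 0 := by simp [pv]
    rw [this, zero_sub, abs_neg, pow_zero, mul_one]
    exact abs_vinf_le M hC hC0 hγ0 hγ1 s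
  | succ n ih =>
    intro s
    have hpol := gpol_policy M (γ := γ)
    have h1 : pv M γ (gpol M γ) (n + 1) s
        = backup M γ (pv M γ (gpol M γ) n) s (gact M γ s) := by
      rw [pv_succ M hC hC0 hγ0 hγ1 hpol n s]
      exact sum_gpol M s (fun a => backup M γ (pv M γ (gpol M γ) n) s a)
    have h2 : vinf M γ s = backup M γ (vinf M γ) s (gact M γ s) := by
      rw [← gact_spec, bop_vinf M hC hC0 hγ0 hγ1]
    rw [h1, h2]
    have := backup_sub_le M hγ0
      (fun x => abs_pv_le M hC hC0 hγ0 hγ1 hpol n x)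
      (abs_vinf_le M hC hC0 hγ0 hγ1) ih (gact_mem M (γ := γ) s)
    calc |backup M γ (pv M γ (gpol M γ) n) s (gact M γ s)
          - backup M γ (vinf M γ) s (gact M γ s)| ≤ γ * (C / (1 - γ) * γ ^ n) := this
      _ = C / (1 - γ) * γ ^ (n + 1) := by ring

lemma value_gpol (hC : ∀ r, |M.rval r| ≤ C) (hC0 : 0 ≤ C)
    (hγ0 : 0 ≤ γ) (hγ1 : γ < 1) (s : S) :
    M.value γ (gpol M γ) s = vinf M γ s := by
  have hpol := gpol_policy M (γ := γ)
  have t1 : Filter.Tendsto (fun n => pv M γ (gpol M γ) n s) Filter.atTop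
      (nhds (M.value γ (gpol M γ) s)) := pv_tendsto_value M hC hC0 hγ0 hγ1 hpol s
  have hu : Filter.Tendsto (fun n : ℕ => C / (1 - γ) * γ ^ n) Filter.atTop (nhds 0) := by
    simpa using (tendsto_pow_atTop_nhds_zero_of_lt_one hγ0 hγ1).const_mul (C / (1 - γ))
  have t0 : Filter.Tendsto (fun n : ℕ => pv M γ (gpol M γ) n s - vinf M γ s)
      Filter.atTop (nhds 0) := by
    refine tendsto_of_tendsto_of_tendsto_of_le_of_le (g := fun n : ℕ => -(C / (1 - γ) * γ ^ n))
      (h := fun n : ℕ => C / (1 - γ) * γ ^ n) (by simpa using hu.neg) hu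
      (fun n => (abs_le.1 (pv_gpol_close M hC hC0 hγ0 hγ1 n s)).1)
      (fun n => (abs_le.1 (pv_gpol_close M hC hC0 hγ0 hγ1 n s)).2)
  have t2 : Filter.Tendsto (fun n => pv M γ (gpol M γ) n s) Filter.atTop
      (nhds (vinf M γ s)) := by
    have := t0.add_const (vinf M γ s)
    simpa using this
  exact tendsto_nhds_unique t1 t2

lemma vinf_le_optValue (hC : ∀ r, |M.rval r| ≤ C) (hC0 : 0 ≤ C)
    (hγ0 : 0 ≤ γ) (hγ1 : γ < 1) (s : S) :
    vinf M γ s ≤ M.optValue γ s := by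
  rw [← value_gpol M hC hC0 hγ0 hγ1 s]
  exact value_le_optValue M hC hC0 hγ0 hγ1 (gpol_policy M) s

end MDPAux

namespace MDPAux
open MDP

variable {S A Rw : Type*} {M : MDP S A Rw}

lemma summable_p_slice1 (M : MDP S A Rw) {s : S} {a : A} (h : a ∈ M.adm s) (r : Rw) :
    Summable (fun s' : S => M.p s' r s a) := by
  have : (fun s' : S => M.p s' r s a) =
      (fun x : S × Rw => M.p x.1 x.2 s a) ∘ (fun s' => (s', r)) := rfl
  rw [this]
  exact (summable_p M h).comp_injective (fun x y hxy => by simpa using hxy)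

lemma expR_eq_iterated (M : MDP S A Rw) {C : ℝ} (hC : ∀ r, |M.rval r| ≤ C)
    {s : S} {a : A} (h : a ∈ M.adm s) :
    expR M s a = ∑' r : Rw, (∑' s' : S, M.p s' r s a) * M.rval r := by
  have h1 : ∑' y : Rw × S, M.p y.2 y.1 s a * M.rval y.1
      = ∑' x : S × Rw, M.p x.1 x.2 s a * M.rval x.2 :=
    (Equiv.prodComm Rw S).tsum_eq (fun x : S × Rw => M.p x.1 x.2 s a * M.rval x.2)
  have hsum : Summable (fun y : Rw × S => M.p y.2 y.1 s a * M.rval y.1) :=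
    (summable_pr M hC h).comp_injective (Equiv.prodComm Rw S).injective
  rw [expR, ← h1, Summable.tsum_prod' hsum
    (fun r => (summable_p_slice1 M h r).mul_right (M.rval r))]
  refine tsum_congr fun r => ?_
  show ∑' s' : S, M.p s' r s a * M.rval r = _
  exact tsum_mul_right

section Sym

variable {V : M.VisibleSymmetry} {Q : MDP (Quotient V.eqS) (Quotient V.eqP) Rw}

lemma tsum_quot (f : S → ℝ) (hf : Summable f) :
    ∑' s : S, f s =
      ∑' X : Quotient V.eqS, ∑' x : (Quotient.mk V.eqS ⁻¹' {X} : Set S), f x.1 :=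
  (hf.hasSum.tsum_fiberwise (Quotient.mk V.eqS)).tsum_eq.symm

lemma fiber_tsum (f : S → ℝ) (t : S) :
    ∑' x : (Quotient.mk V.eqS ⁻¹' {Quotient.mk V.eqS t} : Set S), f x.1
      = ∑' x : {x : S // V.eqS.r x t}, f x.1 := by
  have hiff : ∀ x : S, V.eqS.r x t ↔
      x ∈ (Quotient.mk V.eqS ⁻¹' {Quotient.mk V.eqS t} : Set S) := fun x => by
    simp only [Set.mem_preimage, Set.mem_singleton_iff]
    exact ⟨fun h => Quotient.sound h, fun h => Quotient.eq.mp h⟩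
  calc ∑' x : (Quotient.mk V.eqS ⁻¹' {Quotient.mk V.eqS t} : Set S), f x.1
      = ∑' x : {x : S // V.eqS.r x t}, f ((Equiv.subtypeEquivRight hiff) x).1 :=
        ((Equiv.subtypeEquivRight hiff).tsum_eq _).symm
    _ = ∑' x : {x : S // V.eqS.r x t}, f x.1 := tsum_congr fun x => by
        rw [Equiv.subtypeEquivRight_apply]

lemma mkq_adm (hadm : ∀ (q : M.Pairs) (X : Quotient V.eqS),
      Quotient.mk V.eqP q ∈ Q.adm X ↔ Quotient.mk V.eqS q.1.1 = X) (q : M.Pairs) :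
    Quotient.mk V.eqP q ∈ Q.adm (Quotient.mk V.eqS q.1.1) := (hadm q _).mpr rfl

lemma tsum_p_quot
    (hp : ∀ (q : M.Pairs) (s' : S) (r : Rw),
      Q.p (Quotient.mk V.eqS s') r (Quotient.mk V.eqS q.1.1) (Quotient.mk V.eqP q) =
        ∑' x : {x : S // V.eqS.r x s'}, M.p x.1 r q.1.1 q.1.2)
    (q : M.Pairs) (r : Rw) :
    ∑' s' : S, M.p s' r q.1.1 q.1.2
      = ∑' X : Quotient V.eqS, Q.p X r (Quotient.mk V.eqS q.1.1) (Quotient.mk V.eqP q) := by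
  rw [tsum_quot _ (summable_p_slice1 M q.2 r)]
  refine tsum_congr fun X => ?_
  refine Quotient.inductionOn X (fun t => ?_)
  rw [fiber_tsum (fun s' => M.p s' r q.1.1 q.1.2) t]
  exact (hp q t r).symm

lemma fiber_tr
    (hp : ∀ (q : M.Pairs) (s' : S) (r : Rw),
      Q.p (Quotient.mk V.eqS s') r (Quotient.mk V.eqS q.1.1) (Quotient.mk V.eqP q) =
        ∑' x : {x : S // V.eqS.r x s'}, M.p x.1 r q.1.1 q.1.2)
    (q : M.Pairs) (t : S) :
    ∑' x : {x : S // V.eqS.r x t}, tr M q.1.1 q.1.2 x.1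
      = tr Q (Quotient.mk V.eqS q.1.1) (Quotient.mk V.eqP q) (Quotient.mk V.eqS t) := by
  have hinj : Function.Injective
      (fun y : {x : S // V.eqS.r x t} × Rw => ((y.1.1, y.2) : S × Rw)) := by
    rintro ⟨⟨x1, hx1⟩, r1⟩ ⟨⟨x2, hx2⟩, r2⟩ h
    simp only [Prod.mk.injEq] at h
    simp [h.1, h.2]
  have hF : Summable (Function.uncurry
      (fun (x : {x : S // V.eqS.r x t}) (r : Rw) => M.p x.1 r q.1.1 q.1.2)) :=
    (summable_p M q.2).comp_injective hinj
  calc ∑' x : {x : S // V.eqS.r x t}, tr M q.1.1 q.1.2 x.1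
      = ∑' (x : {x : S // V.eqS.r x t}) (r : Rw), M.p x.1 r q.1.1 q.1.2 := rfl
    _ = ∑' (r : Rw) (x : {x : S // V.eqS.r x t}), M.p x.1 r q.1.1 q.1.2 := by
        rw [Summable.tsum_comm hF]
    _ = ∑' r : Rw, Q.p (Quotient.mk V.eqS t) r (Quotient.mk V.eqS q.1.1)
          (Quotient.mk V.eqP q) := tsum_congr fun r => (hp q t r).symm
    _ = tr Q (Quotient.mk V.eqS q.1.1) (Quotient.mk V.eqP q) (Quotient.mk V.eqS t) := rfl

lemma expR_quot
    (hadm : ∀ (q : M.Pairs) (X : Quotient V.eqS),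
      Quotient.mk V.eqP q ∈ Q.adm X ↔ Quotient.mk V.eqS q.1.1 = X)
    (hp : ∀ (q : M.Pairs) (s' : S) (r : Rw),
      Q.p (Quotient.mk V.eqS s') r (Quotient.mk V.eqS q.1.1) (Quotient.mk V.eqP q) =
        ∑' x : {x : S // V.eqS.r x s'}, M.p x.1 r q.1.1 q.1.2)
    {C : ℝ} (hC : ∀ r, |M.rval r| ≤ C) (hrval : Q.rval = M.rval)
    (q : M.Pairs) :
    expR M q.1.1 q.1.2 = expR Q (Quotient.mk V.eqS q.1.1) (Quotient.mk V.eqP q) := by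
  have hCQ : ∀ r, |Q.rval r| ≤ C := by rw [hrval]; exact hC
  rw [expR_eq_iterated M hC q.2, expR_eq_iterated Q hCQ (mkq_adm hadm q)]
  refine tsum_congr fun r => ?_
  rw [tsum_p_quot hp q r, hrval]

lemma tr_mul_quot
    (hp : ∀ (q : M.Pairs) (s' : S) (r : Rw),
      Q.p (Quotient.mk V.eqS s') r (Quotient.mk V.eqS q.1.1) (Quotient.mk V.eqP q) =
        ∑' x : {x : S // V.eqS.r x s'}, M.p x.1 r q.1.1 q.1.2)
    {g : Quotient V.eqS → ℝ} {D : ℝ} (hg : ∀ X, |g X| ≤ D)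
    (q : M.Pairs) :
    ∑' s' : S, tr M q.1.1 q.1.2 s' * g (Quotient.mk V.eqS s')
      = ∑' X : Quotient V.eqS,
          tr Q (Quotient.mk V.eqS q.1.1) (Quotient.mk V.eqP q) X * g X := by
  rw [tsum_quot _ (summable_tr_mul M q.2 (fun s' => hg (Quotient.mk V.eqS s')))]
  refine tsum_congr fun X => ?_
  refine Quotient.inductionOn X (fun t => ?_)
  rw [fiber_tsum (fun s' => tr M q.1.1 q.1.2 s' * g (Quotient.mk V.eqS s')) t]
  calc ∑' x : {x : S // V.eqS.r x t}, tr M q.1.1 q.1.2 x.1 * g (Quotient.mk V.eqS x.1)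
      = ∑' x : {x : S // V.eqS.r x t}, tr M q.1.1 q.1.2 x.1 * g (Quotient.mk V.eqS t) :=
        tsum_congr fun x => by rw [Quotient.sound x.2]
    _ = (∑' x : {x : S // V.eqS.r x t}, tr M q.1.1 q.1.2 x.1) * g (Quotient.mk V.eqS t) :=
        tsum_mul_right
    _ = _ := by rw [fiber_tr hp q t]

lemma backup_quot
    (hadm : ∀ (q : M.Pairs) (X : Quotient V.eqS),
      Quotient.mk V.eqP q ∈ Q.adm X ↔ Quotient.mk V.eqS q.1.1 = X)
    (hp : ∀ (q : M.Pairs) (s' : S) (r : Rw),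
      Q.p (Quotient.mk V.eqS s') r (Quotient.mk V.eqS q.1.1) (Quotient.mk V.eqP q) =
        ∑' x : {x : S // V.eqS.r x s'}, M.p x.1 r q.1.1 q.1.2)
    {C : ℝ} (hC : ∀ r, |M.rval r| ≤ C) (hrval : Q.rval = M.rval)
    {γ : ℝ} {g : Quotient V.eqS → ℝ} {D : ℝ} (hg : ∀ X, |g X| ≤ D) (q : M.Pairs) :
    backup M γ (fun s' => g (Quotient.mk V.eqS s')) q.1.1 q.1.2
      = backup Q γ g (Quotient.mk V.eqS q.1.1) (Quotient.mk V.eqP q) := by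
  rw [backup, backup, expR_quot hadm hp hC hrval q, tr_mul_quot hp hg q]

end Sym

end MDPAux

namespace MDPAux
open MDP

variable {S A Rw : Type*} {M : MDP S A Rw}
variable {V : M.VisibleSymmetry} {Q : MDP (Quotient V.eqS) (Quotient V.eqP) Rw}

lemma N_one (hs : V.Simple) (s : S) (a : A) (h : a ∈ M.adm s) : V.N s a h = 1 := by
  have hset : {a' : A | ∃ h' : a' ∈ M.adm s, V.eqP.r ⟨(s, a), h⟩ ⟨(s, a'), h'⟩} = {a} := by
    ext a'
    simp only [Set.mem_setOf_eq, Set.mem_singleton_iff]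
    constructor
    · rintro ⟨h', hrel⟩
      exact (hs _ _ hrel).symm
    · rintro rfl
      exact ⟨h, V.eqP.iseqv.refl _⟩
  rw [VisibleSymmetry.N, hset, Set.ncard_singleton]

lemma group_sum
    (hadm : ∀ (q : M.Pairs) (X : Quotient V.eqS),
      Quotient.mk V.eqP q ∈ Q.adm X ↔ Quotient.mk V.eqS q.1.1 = X)
    {π : Quotient V.eqS → Quotient V.eqP → ℝ}
    {π' : S → A → ℝ}
    (hπ'adm : ∀ (s : S) (a : A) (h : a ∈ M.adm s),
      π' s a = π (Quotient.mk V.eqS s) (Quotient.mk V.eqP ⟨(s, a), h⟩) / (V.N s a h : ℝ))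
    (s : S) (F : Quotient V.eqP → ℝ) (F' : A → ℝ)
    (hF' : ∀ (a : A) (h : a ∈ M.adm s), F' a = F (Quotient.mk V.eqP ⟨(s, a), h⟩)) :
    ∑ a ∈ M.adm s, π' s a * F' a
      = ∑ Y ∈ Q.adm (Quotient.mk V.eqS s), π (Quotient.mk V.eqS s) Y * F Y := by
  classical
  rw [← Finset.sum_attach (M.adm s) (fun a => π' s a * F' a)]
  set φ : {x // x ∈ M.adm s} → Quotient V.eqP :=
    fun x => Quotient.mk V.eqP ⟨(s, x.1), x.2⟩ with hφ
  have hmaps : ∀ x ∈ (M.adm s).attach, φ x ∈ Q.adm (Quotient.mk V.eqS s) :=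
    fun x _ => (hadm _ _).mpr rfl
  rw [← Finset.sum_fiberwise_of_maps_to hmaps (fun x => π' s x.1 * F' x.1)]
  refine Finset.sum_congr rfl fun Y hY => ?_
  obtain ⟨q0, hq0⟩ := Quotient.exists_rep Y
  have hq0adm : Quotient.mk V.eqS q0.1.1 = Quotient.mk V.eqS s :=
    (hadm q0 _).mp (hq0 ▸ hY)
  have hrel : V.eqS.r q0.1.1 s := Quotient.eq.mp hq0adm
  obtain ⟨a2, h2, hrel2⟩ := V.lift_action q0 s hrel
  have hY2 : φ ⟨a2, h2⟩ = Y := by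
    rw [hφ]
    exact (Quotient.sound hrel2).symm.trans hq0
  have hmem : (⟨a2, h2⟩ : {x // x ∈ M.adm s}) ∈
      (M.adm s).attach.filter (fun y => φ y = Y) :=
    Finset.mem_filter.mpr ⟨Finset.mem_attach _ _, hY2⟩
  have hcard0 : ((M.adm s).attach.filter (fun y => φ y = Y)).card ≠ 0 :=
    Finset.card_ne_zero_of_mem hmem
  have hcardR : (((M.adm s).attach.filter (fun y => φ y = Y)).card : ℝ) ≠ 0 :=
    Nat.cast_ne_zero.mpr hcard0
  have hNcard : ∀ x ∈ (M.adm s).attach.filter (fun y => φ y = Y),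
      V.N s x.1 x.2 = ((M.adm s).attach.filter (fun y => φ y = Y)).card := by
    intro x hx
    have hφx : φ x = Y := (Finset.mem_filter.mp hx).2
    have hNset : {a' : A | ∃ h' : a' ∈ M.adm s, V.eqP.r ⟨(s, x.1), x.2⟩ ⟨(s, a'), h'⟩}
        = ↑(((M.adm s).attach.filter (fun y => φ y = Y)).image Subtype.val) := by
      ext a'
      simp only [Set.mem_setOf_eq, Finset.coe_image, Set.mem_image, Finset.mem_coe,
        Finset.mem_filter, Finset.mem_attach, true_and]
      constructor
      · rintro ⟨h', hrel'⟩
        refine ⟨⟨a', h'⟩, ?_, rfl⟩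
        have : φ ⟨a', h'⟩ = φ x := (Quotient.sound hrel').symm
        rw [this, hφx]
      · rintro ⟨y, hy, rfl⟩
        exact ⟨y.2, Quotient.eq.mp (hφx.trans hy.symm)⟩
    rw [VisibleSymmetry.N, hNset, Set.ncard_coe_finset,
      Finset.card_image_of_injective _ Subtype.val_injective]
  have hterm : ∀ x ∈ (M.adm s).attach.filter (fun y => φ y = Y),
      π' s x.1 * F' x.1 = π (Quotient.mk V.eqS s) Y
        / (((M.adm s).attach.filter (fun y => φ y = Y)).card : ℝ) * F Y := by
    intro x hx
    have hφx : φ x = Y := (Finset.mem_filter.mp hx).2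
    rw [hπ'adm s x.1 x.2, hF' x.1 x.2, hNcard x hx]
    rw [show Quotient.mk V.eqP ⟨(s, x.1), x.2⟩ = Y from hφx]
  rw [Finset.sum_congr rfl hterm, Finset.sum_const, nsmul_eq_mul]
  field_simp

lemma pv_le_bit
    (hadm : ∀ (q : M.Pairs) (X : Quotient V.eqS),
      Quotient.mk V.eqP q ∈ Q.adm X ↔ Quotient.mk V.eqS q.1.1 = X)
    (hp : ∀ (q : M.Pairs) (s' : S) (r : Rw),
      Q.p (Quotient.mk V.eqS s') r (Quotient.mk V.eqS q.1.1) (Quotient.mk V.eqP q) =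
        ∑' x : {x : S // V.eqS.r x s'}, M.p x.1 r q.1.1 q.1.2)
    {C : ℝ} (hC : ∀ r, |M.rval r| ≤ C) (hC0 : 0 ≤ C) (hrval : Q.rval = M.rval)
    {γ : ℝ} (hγ0 : 0 ≤ γ) (hγ1 : γ < 1)
    {σ : S → A → ℝ} (hσ : M.IsPolicy σ) :
    ∀ (n : ℕ) (s : S), pv M γ σ n s ≤ bit Q γ n (Quotient.mk V.eqS s) := by
  have hCQ : ∀ r, |Q.rval r| ≤ C := by rw [hrval]; exact hC
  intro n
  induction n with
  | zero => intro s; simp [pv, bit]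
  | succ n ih =>
    intro s
    rw [pv_succ M hC hC0 hγ0 hγ1 hσ n s]
    have hbit : ∀ X, |bit Q γ n X| ≤ C / (1 - γ) := abs_bit_le Q hCQ hC0 hγ0 hγ1 n
    have key : ∀ a ∈ M.adm s,
        expR M s a + γ * ∑' s' : S, tr M s a s' * pv M γ σ n s'
          ≤ bit Q γ (n + 1) (Quotient.mk V.eqS s) := by
      intro a ha
      have step1 : ∑' s' : S, tr M s a s' * pv M γ σ n s'
          ≤ ∑' s' : S, tr M s a s' * bit Q γ n (Quotient.mk V.eqS s') :=
        Summable.tsum_le_tsum (fun s' => mul_le_mul_of_nonneg_left (ih s') (tr_nonneg M s a s'))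
          (summable_tr_mul M ha (fun x => abs_pv_le M hC hC0 hγ0 hγ1 hσ n x))
          (summable_tr_mul M ha (fun x => hbit _))
      have step2 : expR M s a + γ * ∑' s' : S, tr M s a s' * bit Q γ n (Quotient.mk V.eqS s')
          = backup Q γ (bit Q γ n) (Quotient.mk V.eqS s)
              (Quotient.mk V.eqP ⟨(s, a), ha⟩) := by
        have h := backup_quot hadm hp hC hrval (γ := γ) hbit (⟨(s, a), ha⟩ : M.Pairs)
        rw [backup] at h
        exact h
      have step3 : backup Q γ (bit Q γ n) (Quotient.mk V.eqS s)
            (Quotient.mk V.eqP ⟨(s, a), ha⟩)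
          ≤ bit Q γ (n + 1) (Quotient.mk V.eqS s) := by
        rw [bit_succ_eq]
        exact Finset.le_sup' (fun Y => backup Q γ (bit Q γ n) (Quotient.mk V.eqS s) Y)
          (mkq_adm hadm (⟨(s, a), ha⟩ : M.Pairs))
      have step0 : expR M s a + γ * ∑' s' : S, tr M s a s' * pv M γ σ n s'
          ≤ expR M s a + γ * ∑' s' : S, tr M s a s' * bit Q γ n (Quotient.mk V.eqS s') := by
        have := mul_le_mul_of_nonneg_left step1 hγ0
        linarith
      exact le_trans step0 (le_trans (le_of_eq step2) step3)
    calc ∑ a ∈ M.adm s, σ s a *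
          (expR M s a + γ * ∑' s' : S, tr M s a s' * pv M γ σ n s')
        ≤ ∑ a ∈ M.adm s, σ s a * bit Q γ (n + 1) (Quotient.mk V.eqS s) :=
          Finset.sum_le_sum fun a ha =>
            mul_le_mul_of_nonneg_left (key a ha) (hσ.1 s a)
      _ = bit Q γ (n + 1) (Quotient.mk V.eqS s) := by
          rw [← Finset.sum_mul, hσ.2.2 s, one_mul]

end MDPAux

open MDP MDPAux

/-- Let `M` be an MDP with discount factor `γ ∈ [0,1)` and `~` a visible
symmetry of `M` with quotient MDP `Q = M/~` (characterized by `hadm`, `hp`, `hrval`).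
For a policy `π` in `M/~`, the pullback `π'(s,a) = π([(s,a)]_Ψ) / N_Ψ(s,a)` is a policy
in `M`; if `π` is optimal in `M/~` then `π'` is optimal in `M`; and if `~` is simple
then `π'(s,a) = π([(s,a)] | [s])`. -/
theorem visibleSymmetry_pullback_optimal
    {S A Rw : Type*} [Countable S] [Countable Rw]
    (M : MDP S A Rw) (γ : ℝ) (hγ0 : 0 ≤ γ) (hγ1 : γ < 1)
    (V : M.VisibleSymmetry)
    (Q : MDP (Quotient V.eqS) (Quotient V.eqP) Rw)
    (hrval : Q.rval = M.rval)
    (hadm : ∀ (q : M.Pairs) (X : Quotient V.eqS),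
      Quotient.mk V.eqP q ∈ Q.adm X ↔ Quotient.mk V.eqS q.1.1 = X)
    (hp : ∀ (q : M.Pairs) (s' : S) (r : Rw),
      Q.p (Quotient.mk V.eqS s') r (Quotient.mk V.eqS q.1.1) (Quotient.mk V.eqP q) =
        ∑' x : {x : S // V.eqS.r x s'}, M.p x.1 r q.1.1 q.1.2)
    (π : Quotient V.eqS → Quotient V.eqP → ℝ) (hπ : Q.IsPolicy π)
    (π' : S → A → ℝ)
    (hπ'adm : ∀ (s : S) (a : A) (h : a ∈ M.adm s),
      π' s a = π (Quotient.mk V.eqS s) (Quotient.mk V.eqP ⟨(s, a), h⟩) / (V.N s a h : ℝ))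
    (hπ'nadm : ∀ (s : S) (a : A), a ∉ M.adm s → π' s a = 0) :
    M.IsPolicy π' ∧
      (Q.IsOptimal γ π → M.IsOptimal γ π') ∧
      (V.Simple → ∀ (s : S) (a : A) (h : a ∈ M.adm s),
        π' s a = π (Quotient.mk V.eqS s) (Quotient.mk V.eqP ⟨(s, a), h⟩)) := by
  obtain ⟨C0, hC0'⟩ := M.rval_bdd
  set C := max C0 0 with hCdef
  have hC : ∀ r, |M.rval r| ≤ C := fun r => le_trans (hC0' r) (le_max_left _ _)
  have hC0 : 0 ≤ C := le_max_right _ _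
  have hCQ : ∀ r, |Q.rval r| ≤ C := by rw [hrval]; exact hC
  -- π' is a policy
  have hpol' : M.IsPolicy π' := by
    refine ⟨fun s a => ?_, hπ'nadm, fun s => ?_⟩
    · by_cases h : a ∈ M.adm s
      · rw [hπ'adm s a h]
        exact div_nonneg (hπ.1 _ _) (Nat.cast_nonneg _)
      · rw [hπ'nadm s a h]
    · have hg := group_sum (Q := Q) hadm hπ'adm s (fun _ => (1 : ℝ)) (fun _ => (1 : ℝ))
        (fun a h => rfl)
      simp only [mul_one] at hg
      rw [hg, hπ.2.2]
  refine ⟨hpol', ?_, ?_⟩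
  · -- optimality transfer
    intro hopt
    -- step rewards agree
    have hsr : ∀ (k : ℕ) (s : S),
        M.stepReward π' k s = Q.stepReward π k (Quotient.mk V.eqS s) := by
      intro k
      induction k with
      | zero =>
        intro s
        rw [stepReward_zero M π' s, stepReward_zero Q π (Quotient.mk V.eqS s)]
        exact group_sum (Q := Q) hadm hπ'adm s
          (fun Y => expR Q (Quotient.mk V.eqS s) Y) (fun a => expR M s a)
          (fun a h => expR_quot hadm hp hC hrval (⟨(s, a), h⟩ : M.Pairs))
      | succ k ih =>
        intro s
        rw [stepReward_succ M π' k s, stepReward_succ Q π k (Quotient.mk V.eqS s)]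
        have hb : ∀ X, |Q.stepReward π k X| ≤ C := abs_stepReward_le Q hCQ hC0 hπ k
        refine group_sum (Q := Q) hadm hπ'adm s
          (fun Y => ∑' X, tr Q (Quotient.mk V.eqS s) Y X * Q.stepReward π k X)
          (fun a => ∑' s' : S, tr M s a s' * M.stepReward π' k s')
          (fun a h => ?_)
        calc ∑' s' : S, tr M s a s' * M.stepReward π' k s'
            = ∑' s' : S, tr M s a s' * Q.stepReward π k (Quotient.mk V.eqS s') :=
              tsum_congr fun s' => by rw [ih s']
          _ = ∑' X, tr Q (Quotient.mk V.eqS s)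
                (Quotient.mk V.eqP (⟨(s, a), h⟩ : M.Pairs)) X * Q.stepReward π k X :=
              tr_mul_quot hp hb (⟨(s, a), h⟩ : M.Pairs)
    -- values agree
    have hval : ∀ s : S, M.value γ π' s = Q.value γ π (Quotient.mk V.eqS s) := by
      intro s
      exact tsum_congr fun k => by rw [hsr k s]
    -- every value in M is dominated by the optimal value of Q
    have hub : ∀ (σ : S → A → ℝ), M.IsPolicy σ → ∀ s : S,
        M.value γ σ s ≤ Q.optValue γ (Quotient.mk V.eqS s) := by
      intro σ hσ s
      have h1 : M.value γ σ s ≤ vinf Q γ (Quotient.mk V.eqS s) :=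
        le_of_tendsto_of_tendsto' (pv_tendsto_value M hC hC0 hγ0 hγ1 hσ s)
          (bit_tendsto_vinf Q hCQ hC0 hγ0 hγ1 (Quotient.mk V.eqS s))
          (fun n => pv_le_bit hadm hp hC hC0 hrval hγ0 hγ1 hσ n s)
      exact le_trans h1 (vinf_le_optValue Q hCQ hC0 hγ0 hγ1 (Quotient.mk V.eqS s))
    refine ⟨hpol', fun s => ?_⟩
    have le1 : M.value γ π' s ≤ M.optValue γ s :=
      value_le_optValue M hC hC0 hγ0 hγ1 hpol' s
    have le2 : M.optValue γ s ≤ M.value γ π' s := by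
      have hne : Nonempty {σ : S → A → ℝ // M.IsPolicy σ} := ⟨⟨π', hpol'⟩⟩
      refine ciSup_le fun σ => ?_
      calc M.value γ σ.1 s ≤ Q.optValue γ (Quotient.mk V.eqS s) := hub σ.1 σ.2 s
        _ = Q.value γ π (Quotient.mk V.eqS s) := (hopt.2 _).symm
        _ = M.value γ π' s := (hval s).symm
    exact le_antisymm le1 le2
  · -- simple case
    intro hs s a h
    rw [hπ'adm s a h, N_one hs s a h]
    norm_num
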